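/- Given a directed graph g with source s and a vertex u ≠ s, the set R_u = {w : w reachable from s, and every s-to-w path passes through u} satisfies: R_u is exactly the set of vertices dominated by u that are reachable from s; moreover σ(s, g) − |R_u| equals the number of vertices reachable from s in g with u removed. -/

import Mathlib

/-!
Dominators in a directed graph `g : V → V → Prop` with a source vertex `s`.
-/

open Finset

noncomputable section
open scoped Classical

variable {V : Type*}

/-- `w` is reachable from `s` in the directed graph `g`. -/
def Reach (g : V → V → Prop) (s w : V) : Prop :=
  Relation.ReflTransGen g s w

/-- `w` is reachable from `s` in `g` by a path avoiding the vertex `u`. -/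
def ReachAvoid (g : V → V → Prop) (u s w : V) : Prop :=
  Relation.ReflTransGen (fun a b => g a b ∧ a ≠ u ∧ b ≠ u) s w

/-- `u` dominates `v` (w.r.t. source `s`): `v` is reachable from `s` and every
path from `s` to `v` passes through `u`. -/
def Dominates (g : V → V → Prop) (s u v : V) : Prop :=
  Reach g s v ∧ (u = v ∨ ¬ ReachAvoid g u s v)

/-- `u` is the immediate dominator of `v`: `u` is a dominator of `v` other than
`v`, and every other dominator of `v` dominates `u`. -/
def IsIdom (g : V → V → Prop) (s u v : V) : Prop :=
  Dominates g s u v ∧ u ≠ v ∧ ∀ w, Dominates g s w v → w ≠ v → Dominates g s w u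

/-- `v` lies in the subtree rooted at `u` of the dominator tree of `g` with
source `s` (i.e. `u` is an ancestor of `v`, or `v` itself, along immediate
dominator edges). -/
def InDomSubtree (g : V → V → Prop) (s u v : V) : Prop :=
  Relation.ReflTransGen (fun a b => IsIdom g s a b) u v

/-- for `u ≠ s`, the set
`R_u = {w | w reachable from s and every s-to-w path passes through u}` is
exactly the set of reachable vertices dominated by `u`; moreover
`σ(s,g) - |R_u|` equals the number of vertices reachable from `s` in `g` with
`u` removed. -/
theorem through_set_eq_dominated_and_count [Fintype V] (g : V → V → Prop)
    (s u : V) (hsu : s ≠ u) :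
    (Finset.univ.filter fun w => Reach g s w ∧ ¬ ReachAvoid g u s w) =
      (Finset.univ.filter fun w => Dominates g s u w) ∧
    (Finset.univ.filter fun w => Reach g s w).card -
        (Finset.univ.filter fun w => Reach g s w ∧ ¬ ReachAvoid g u s w).card =
      (Finset.univ.filter fun w => ReachAvoid g u s w).card := by
  have hmono : ∀ w, ReachAvoid g u s w → Reach g s w := fun w h =>
    Relation.ReflTransGen.mono (fun a b hab => hab.1) _ _ h
  have hnu : ¬ ReachAvoid g u s u := by
    intro h
    rcases h.cases_tail with h | ⟨c, _, _, _, hbu⟩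
    · exact hsu h.symm
    · exact hbu rfl
  constructor
  · apply Finset.filter_congr
    intro w _
    simp only [Dominates, Reach]
    constructor
    · exact fun ⟨h1, h2⟩ => ⟨h1, Or.inr h2⟩
    · rintro ⟨h1, h2 | h2⟩
      · exact ⟨h1, h2 ▸ hnu⟩
      · exact ⟨h1, h2⟩
  · have hset : (Finset.univ.filter fun w => Reach g s w ∧ ¬ ReachAvoid g u s w)
        = (Finset.univ.filter fun w => Reach g s w) \
          (Finset.univ.filter fun w => ReachAvoid g u s w) := by
      ext w; simp [and_assoc]
    have hsub : (Finset.univ.filter fun w => ReachAvoid g u s w)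
        ⊆ (Finset.univ.filter fun w => Reach g s w) := by
      intro w hw
      simp only [Finset.mem_filter, Finset.mem_univ, true_and] at *
      exact hmono w hw
    rw [hset, Finset.card_sdiff_of_subset hsub,
      Nat.sub_sub_self (Finset.card_le_card hsub)]
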